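/- Let 0 ≤ ε < 1, 0 ≤ p ≤ 1, let N be the single-qubit generalized amplitude damping channel with Kraus operators E_0 = √p·diag(1, √(1−ε)), E_1 = √p·√ε·|0⟩⟨1|, E_2 = √(1−p)·diag(√(1−ε), 1), E_3 = √(1−p)·√ε·|1⟩⟨0|, and let O = Z be the Pauli Z matrix. Then the retrieving cost γ_O(N) equals (|1−2p|·ε + 1)/(1−ε), and it is attained by the map D = c_1·D_1 + c_2·D_2 with c_1 = −c_2 = (|1−2p|·ε+1)/(2(1−ε)) and channels D_1, D_2 whose Choi matrices are J_{D_1} = (1/(2(|1−2p|ε+1)))·Z⊗Z + (ε(1−2p)/(2(|1−2p|ε+1)))·I⊗Z + (1/2)·I⊗I and J_{D_2} = −(1/(2(|1−2p|ε+1)))·Z⊗Z − (ε(1−2p)/(2(|1−2p|ε+1)))·I⊗Z + (1/2)·I⊗I. -/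

import Mathlib

open Matrix
open scoped Kronecker ComplexOrder

abbrev MatC (n : Type*) := Matrix n n ℂ

/-- A linear map on matrices is Hermitian-preserving if it sends Hermitian
matrices to Hermitian matrices. -/
def IsHermitianPreserving {n : Type*} [Fintype n] [DecidableEq n]
    (M : MatC n →ₗ[ℂ] MatC n) : Prop :=
  ∀ X : MatC n, X.IsHermitian → (M X).IsHermitian

/-- A linear map on matrices is trace-scaling if it scales the trace by a fixed
real factor. -/
def IsTraceScaling {n : Type*} [Fintype n] [DecidableEq n]
    (M : MatC n →ₗ[ℂ] MatC n) : Prop :=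
  ∃ p : ℝ, ∀ X : MatC n, (M X).trace = (p : ℂ) * X.trace

/-- The Choi matrix `J_M = Σ_{i,j} |i⟩⟨j| ⊗ M(|i⟩⟨j|)` of a linear map on matrices. -/
def choi {n : Type*} [Fintype n] [DecidableEq n]
    (M : MatC n →ₗ[ℂ] MatC n) : Matrix (n × n) (n × n) ℂ :=
  Matrix.of fun p q => M (Matrix.single p.1 q.1 1) p.2 q.2

/-- A quantum channel is a completely positive (positive semidefinite Choi matrix)
trace-preserving linear map. -/
def IsQuantumChannel {n : Type*} [Fintype n] [DecidableEq n]
    (M : MatC n →ₗ[ℂ] MatC n) : Prop :=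
  (choi M).PosSemidef ∧ ∀ X : MatC n, (M X).trace = X.trace

/-- `Md` is the adjoint of `M` with respect to the Hilbert-Schmidt inner product
`⟨A, B⟩ = tr[A† B]`. -/
def IsAdjointPair {n : Type*} [Fintype n] [DecidableEq n]
    (M Md : MatC n →ₗ[ℂ] MatC n) : Prop :=
  ∀ A B : MatC n, (Aᴴ * M B).trace = ((Md A)ᴴ * B).trace

/-- A density matrix: positive semidefinite with unit trace. -/
def IsDensityMatrix {n : Type*} [Fintype n] [DecidableEq n] (ρ : MatC n) : Prop :=
  ρ.PosSemidef ∧ ρ.trace = 1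

/-- The Hermitian matrices as a real submodule of the complex matrices. -/
noncomputable def hermSubmodule (n : Type*) [Fintype n] [DecidableEq n] :
    Submodule ℝ (MatC n) :=
  selfAdjoint.submodule ℝ (MatC n)

/-- The image of the Hermitian matrices under a (complex-)linear map, as a real
submodule. -/
noncomputable def hermitianImage {n : Type*} [Fintype n] [DecidableEq n]
    (M : MatC n →ₗ[ℂ] MatC n) : Submodule ℝ (MatC n) :=
  (hermSubmodule n).map (M.restrictScalars ℝ)

/-- The linear map `ρ ↦ Σ_i E_i ρ E_i†` given by a finite family of Kraus operators. -/
noncomputable def krausMap {n : Type*} [Fintype n] {k : ℕ} (E : Fin k → Matrix n n ℂ) :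
    MatC n →ₗ[ℂ] MatC n where
  toFun ρ := ∑ i, E i * ρ * (E i)ᴴ
  map_add' ρ σ := by
    simp [Matrix.mul_add, Matrix.add_mul, Finset.sum_add_distrib]
  map_smul' c ρ := by
    simp [Matrix.mul_smul, Matrix.smul_mul, Finset.smul_sum]

/-- The Pauli X matrix. -/
def PauliX : MatC (Fin 2) := !![0, 1; 1, 0]

/-- The Pauli Y matrix. -/
def PauliY : MatC (Fin 2) := !![0, -Complex.I; Complex.I, 0]

/-- The Pauli Z matrix. -/
def PauliZ : MatC (Fin 2) := !![1, 0; 0, -1]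

/-- The Kraus operators of the single-qubit generalized amplitude damping channel
with damping factor `ε` and temperature indicator `p`. -/
noncomputable def gadKraus (p ε : ℝ) : Fin 4 → MatC (Fin 2) :=
  ![(Real.sqrt p : ℂ) • !![1, 0; 0, (Real.sqrt (1 - ε) : ℂ)],
    ((Real.sqrt p * Real.sqrt ε : ℝ) : ℂ) • !![0, 1; 0, 0],
    (Real.sqrt (1 - p) : ℂ) • !![(Real.sqrt (1 - ε) : ℂ), 0; 0, 1],
    ((Real.sqrt (1 - p) * Real.sqrt ε : ℝ) : ℂ) • !![0, 0; 1, 0]]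

/-- The single-qubit generalized amplitude damping channel. -/
noncomputable def gad (p ε : ℝ) : MatC (Fin 2) →ₗ[ℂ] MatC (Fin 2) :=
  krausMap (gadKraus p ε)

/-- The set of costs `|c₁| + |c₂|` over all two-channel retrievers for the shadow
information `tr[ρ O]` through the noisy channel `N`: real numbers `c₁, c₂` and
quantum channels `D₁, D₂` such that `D = c₁·D₁ + c₂·D₂` satisfies
`tr[D(N(ρ))·O] = tr[ρ·O]` for every density matrix `ρ`. -/
def retrCosts {n : Type*} [Fintype n] [DecidableEq n]
    (N : MatC n →ₗ[ℂ] MatC n) (O : MatC n) : Set ℝ :=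
  {s | ∃ (c₁ c₂ : ℝ) (D₁ D₂ : MatC n →ₗ[ℂ] MatC n),
    IsQuantumChannel D₁ ∧ IsQuantumChannel D₂ ∧
    (∀ ρ : MatC n, IsDensityMatrix ρ →
      ((((c₁ : ℂ) • D₁ + (c₂ : ℂ) • D₂) (N ρ)) * O).trace = (ρ * O).trace) ∧
    s = |c₁| + |c₂|}

lemma gad_E00 (p ε : ℝ) (hp0 : 0 ≤ p) (hp1 : p ≤ 1) (hε0 : 0 ≤ ε) (hε1 : ε ≤ 1) :
    gad p ε !![1, 0; 0, 0] = !![((1 - ε * (1 - p) : ℝ) : ℂ), 0; 0, ((ε * (1 - p) : ℝ) : ℂ)] := by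
  have h1 : (Real.sqrt p : ℂ) * (Real.sqrt p : ℂ) = (p : ℂ) := by
    rw [← Complex.ofReal_mul, Real.mul_self_sqrt hp0]
  have h2 : (Real.sqrt ε : ℂ) * (Real.sqrt ε : ℂ) = (ε : ℂ) := by
    rw [← Complex.ofReal_mul, Real.mul_self_sqrt hε0]
  have h3 : (Real.sqrt (1 - ε) : ℂ) * (Real.sqrt (1 - ε) : ℂ) = ((1 - ε : ℝ) : ℂ) := by
    rw [← Complex.ofReal_mul, Real.mul_self_sqrt (by linarith)]
  have h4 : (Real.sqrt (1 - p) : ℂ) * (Real.sqrt (1 - p) : ℂ) = ((1 - p : ℝ) : ℂ) := by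
    rw [← Complex.ofReal_mul, Real.mul_self_sqrt (by linarith)]
  unfold gad krausMap gadKraus
  ext i j
  fin_cases i <;> fin_cases j <;>
    simp [Fin.sum_univ_four, Matrix.mul_apply, Fin.sum_univ_two, Matrix.smul_apply,
      Matrix.vecMul, dotProduct, Matrix.conjTranspose_apply, _root_.map_mul,
      Complex.conj_ofReal]
  · linear_combination (norm := (push_cast; ring_nf)) h1 + ((Real.sqrt (1-p) : ℂ) * (Real.sqrt (1-p) : ℂ)) * h3 + (1 - (ε:ℂ)) * h4
  · linear_combination (norm := (push_cast; ring_nf)) ((Real.sqrt ε : ℂ) * (Real.sqrt ε : ℂ)) * h4 + (1 - (p:ℂ)) * h2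

lemma gad_E11 (p ε : ℝ) (hp0 : 0 ≤ p) (hp1 : p ≤ 1) (hε0 : 0 ≤ ε) (hε1 : ε ≤ 1) :
    gad p ε !![0, 0; 0, 1] = !![((ε * p : ℝ) : ℂ), 0; 0, ((1 - ε * p : ℝ) : ℂ)] := by
  have h1 : (Real.sqrt p : ℂ) * (Real.sqrt p : ℂ) = (p : ℂ) := by
    rw [← Complex.ofReal_mul, Real.mul_self_sqrt hp0]
  have h2 : (Real.sqrt ε : ℂ) * (Real.sqrt ε : ℂ) = (ε : ℂ) := by
    rw [← Complex.ofReal_mul, Real.mul_self_sqrt hε0]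
  have h3 : (Real.sqrt (1 - ε) : ℂ) * (Real.sqrt (1 - ε) : ℂ) = ((1 - ε : ℝ) : ℂ) := by
    rw [← Complex.ofReal_mul, Real.mul_self_sqrt (by linarith)]
  have h4 : (Real.sqrt (1 - p) : ℂ) * (Real.sqrt (1 - p) : ℂ) = ((1 - p : ℝ) : ℂ) := by
    rw [← Complex.ofReal_mul, Real.mul_self_sqrt (by linarith)]
  unfold gad krausMap gadKraus
  ext i j
  fin_cases i <;> fin_cases j <;>
    simp [Fin.sum_univ_four, Matrix.mul_apply, Fin.sum_univ_two, Matrix.smul_apply,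
      Matrix.vecMul, dotProduct, Matrix.conjTranspose_apply, _root_.map_mul,
      Complex.conj_ofReal]
  · linear_combination (norm := (push_cast; ring_nf)) ((Real.sqrt ε : ℂ) * (Real.sqrt ε : ℂ)) * h1 + (p:ℂ) * h2
  · linear_combination (norm := (push_cast; ring_nf)) ((Real.sqrt (1-ε) : ℂ) * (Real.sqrt (1-ε) : ℂ)) * h1 + (p:ℂ) * h3 + h4
noncomputable def retr (x y : ℝ) : MatC (Fin 2) →ₗ[ℂ] MatC (Fin 2) where
  toFun σ := ((x : ℂ) * (σ 0 0 - σ 1 1) + (y : ℂ) * (σ 0 0 + σ 1 1)) • PauliZ +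
    ((σ 0 0 + σ 1 1) / 2) • (1 : MatC (Fin 2))
  map_add' σ τ := by
    ext i j
    fin_cases i <;> fin_cases j <;>
      simp [Matrix.add_apply, Matrix.smul_apply, Matrix.one_apply, PauliZ] <;> ring
  map_smul' c σ := by
    ext i j
    fin_cases i <;> fin_cases j <;>
      simp [Matrix.smul_apply, Matrix.one_apply, PauliZ] <;> ring

lemma retr_trace_Z (x y : ℝ) (σ : MatC (Fin 2)) :
    (retr x y σ * PauliZ).trace =
      2 * ((x : ℂ) * (σ 0 0 - σ 1 1) + (y : ℂ) * (σ 0 0 + σ 1 1)) := by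
  simp [retr, PauliZ, Matrix.trace, Matrix.mul_apply, Fin.sum_univ_two,
    Matrix.add_apply, Matrix.smul_apply, Matrix.one_apply]
  ring

lemma retr_tp (x y : ℝ) (σ : MatC (Fin 2)) : (retr x y σ).trace = σ.trace := by
  simp [retr, PauliZ, Matrix.trace, Fin.sum_univ_two,
    Matrix.add_apply, Matrix.smul_apply, Matrix.one_apply]
  ring

lemma choi_retr (x y : ℝ) :
    choi (retr x y) = ((x : ℂ)) • (PauliZ ⊗ₖ PauliZ) + ((y : ℂ)) • ((1 : MatC (Fin 2)) ⊗ₖ PauliZ) +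
      (1 / 2 : ℂ) • ((1 : MatC (Fin 2)) ⊗ₖ (1 : MatC (Fin 2))) := by
  ext ⟨i, a⟩ ⟨j, b⟩
  fin_cases i <;> fin_cases a <;> fin_cases j <;> fin_cases b <;>
    simp [choi, retr, Matrix.single, PauliZ, Matrix.kroneckerMap_apply,
      Matrix.add_apply, Matrix.smul_apply, Matrix.one_apply, Prod.ext_iff,
      Prod.fst_one, Prod.snd_one, Prod.fst_zero, Prod.snd_zero] <;>
    try ring

lemma choi_retr_diag (x y : ℝ) :
    choi (retr x y) = Matrix.diagonal (fun ik : Fin 2 × Fin 2 =>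
      ((if ik.1 = 0 then (if ik.2 = 0 then x + y + 1/2 else 1/2 - x - y)
        else (if ik.2 = 0 then y - x + 1/2 else x - y + 1/2) : ℝ) : ℂ)) := by
  ext ⟨i, a⟩ ⟨j, b⟩
  fin_cases i <;> fin_cases a <;> fin_cases j <;> fin_cases b <;>
    simp [choi, retr, Matrix.single, PauliZ, Matrix.diagonal,
      Matrix.add_apply, Matrix.smul_apply, Matrix.one_apply, Prod.ext_iff,
      Prod.fst_one, Prod.snd_one, Prod.fst_zero, Prod.snd_zero] <;>
    try (push_cast; ring)

lemma retr_channel (x y : ℝ) (hxy1 : |x + y| ≤ 1/2) (hxy2 : |x - y| ≤ 1/2) :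
    IsQuantumChannel (retr x y) := by
  constructor
  · rw [choi_retr_diag]
    refine Matrix.posSemidef_diagonal_iff.mpr fun ik => ?_
    rw [Complex.zero_le_real]
    rcases abs_le.mp hxy1 with ⟨h1, h2⟩
    rcases abs_le.mp hxy2 with ⟨h3, h4⟩
    rcases ik with ⟨i, k⟩
    dsimp only
    split_ifs <;> linarith
  · exact retr_tp x y
lemma psd_diag_entry {m : Type*} [Fintype m] [DecidableEq m] {J : Matrix m m ℂ}
    (h : J.PosSemidef) (i : m) : 0 ≤ J i i := by
  exact h.diag_nonneg

lemma channel_trace_Z (D : MatC (Fin 2) →ₗ[ℂ] MatC (Fin 2)) (hD : IsQuantumChannel D)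
    (i : Fin 2) :
    ∃ g : ℝ, |g| ≤ 1 ∧ (D (Matrix.single i i 1) * PauliZ).trace = (g : ℂ) := by
  have ha : (0 : ℂ) ≤ D (Matrix.single i i 1) 0 0 := psd_diag_entry hD.1 (i, 0)
  have hb : (0 : ℂ) ≤ D (Matrix.single i i 1) 1 1 := psd_diag_entry hD.1 (i, 1)
  have htr : D (Matrix.single i i 1) 0 0 + D (Matrix.single i i 1) 1 1 = 1 := by
    have h1 := hD.2 (Matrix.single i i 1)
    have h2 : (Matrix.single i i (1:ℂ)).trace = 1 := by
      fin_cases i <;> simp [Matrix.trace, Fin.sum_univ_two, Matrix.single]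
    rw [h2] at h1
    simpa [Matrix.trace, Fin.sum_univ_two] using h1
  rw [Complex.le_def] at ha hb
  simp only [Complex.zero_re, Complex.zero_im] at ha hb
  have hsum : (D (Matrix.single i i 1) 0 0).re
      + (D (Matrix.single i i 1) 1 1).re = 1 := by
    have := congrArg Complex.re htr; simpa using this
  refine ⟨(D (Matrix.single i i 1) 0 0).re - (D (Matrix.single i i 1) 1 1).re,
    ?_, ?_⟩
  · rw [abs_le]; constructor <;> linarith [ha.1, hb.1]
  · have hZ : (D (Matrix.single i i 1) * PauliZ).trace =
        D (Matrix.single i i 1) 0 0 - D (Matrix.single i i 1) 1 1 := by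
      simp [Matrix.trace, Matrix.mul_apply, Fin.sum_univ_two, PauliZ]; ring
    rw [hZ]
    apply Complex.ext <;> simp [← ha.2, ← hb.2]
lemma gad_apply_00 (p ε : ℝ) (hp0 : 0 ≤ p) (hp1 : p ≤ 1) (hε0 : 0 ≤ ε) (hε1 : ε ≤ 1)
    (ρ : MatC (Fin 2)) :
    gad p ε ρ 0 0 = ((1 - ε * (1 - p) : ℝ) : ℂ) * ρ 0 0 + ((ε * p : ℝ) : ℂ) * ρ 1 1 := by
  have h1 : (Real.sqrt p : ℂ) * (Real.sqrt p : ℂ) = (p : ℂ) := by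
    rw [← Complex.ofReal_mul, Real.mul_self_sqrt hp0]
  have h2 : (Real.sqrt ε : ℂ) * (Real.sqrt ε : ℂ) = (ε : ℂ) := by
    rw [← Complex.ofReal_mul, Real.mul_self_sqrt hε0]
  have h3 : (Real.sqrt (1 - ε) : ℂ) * (Real.sqrt (1 - ε) : ℂ) = ((1 - ε : ℝ) : ℂ) := by
    rw [← Complex.ofReal_mul, Real.mul_self_sqrt (by linarith)]
  have h4 : (Real.sqrt (1 - p) : ℂ) * (Real.sqrt (1 - p) : ℂ) = ((1 - p : ℝ) : ℂ) := by
    rw [← Complex.ofReal_mul, Real.mul_self_sqrt (by linarith)]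
  show (krausMap (gadKraus p ε)) ρ 0 0 = _
  unfold krausMap gadKraus
  simp [Fin.sum_univ_four, Matrix.mul_apply, Fin.sum_univ_two, Matrix.smul_apply,
    Matrix.vecMul, dotProduct, Matrix.conjTranspose_apply, _root_.map_mul,
    Complex.conj_ofReal]
  linear_combination (norm := (push_cast; ring_nf))
    (ρ 0 0) * (h1 + ((Real.sqrt (1-p) : ℂ) * (Real.sqrt (1-p) : ℂ)) * h3 + (1 - (ε:ℂ)) * h4)
    + (ρ 1 1) * (((Real.sqrt ε : ℂ) * (Real.sqrt ε : ℂ)) * h1 + (p:ℂ) * h2)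

lemma gad_apply_11 (p ε : ℝ) (hp0 : 0 ≤ p) (hp1 : p ≤ 1) (hε0 : 0 ≤ ε) (hε1 : ε ≤ 1)
    (ρ : MatC (Fin 2)) :
    gad p ε ρ 1 1 = ((ε * (1 - p) : ℝ) : ℂ) * ρ 0 0 + ((1 - ε * p : ℝ) : ℂ) * ρ 1 1 := by
  have h1 : (Real.sqrt p : ℂ) * (Real.sqrt p : ℂ) = (p : ℂ) := by
    rw [← Complex.ofReal_mul, Real.mul_self_sqrt hp0]
  have h2 : (Real.sqrt ε : ℂ) * (Real.sqrt ε : ℂ) = (ε : ℂ) := by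
    rw [← Complex.ofReal_mul, Real.mul_self_sqrt hε0]
  have h3 : (Real.sqrt (1 - ε) : ℂ) * (Real.sqrt (1 - ε) : ℂ) = ((1 - ε : ℝ) : ℂ) := by
    rw [← Complex.ofReal_mul, Real.mul_self_sqrt (by linarith)]
  have h4 : (Real.sqrt (1 - p) : ℂ) * (Real.sqrt (1 - p) : ℂ) = ((1 - p : ℝ) : ℂ) := by
    rw [← Complex.ofReal_mul, Real.mul_self_sqrt (by linarith)]
  show (krausMap (gadKraus p ε)) ρ 1 1 = _
  unfold krausMap gadKraus
  simp [Fin.sum_univ_four, Matrix.mul_apply, Fin.sum_univ_two, Matrix.smul_apply,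
    Matrix.vecMul, dotProduct, Matrix.conjTranspose_apply, _root_.map_mul,
    Complex.conj_ofReal]
  linear_combination (norm := (push_cast; ring_nf))
    (ρ 1 1) * (((Real.sqrt (1-ε) : ℂ) * (Real.sqrt (1-ε) : ℂ)) * h1 + (p:ℂ) * h3 + h4)
    + (ρ 0 0) * (((Real.sqrt ε : ℂ) * (Real.sqrt ε : ℂ)) * h4 + (1 - (p:ℂ)) * h2)
set_option maxHeartbeats 1600000 in
/-- The retrieving cost of the observable `Z` through the generalized amplitude
damping channel is `(|1−2p|ε+1)/(1−ε)`, attained by the explicit retriever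
`D = c₁·D₁ + c₂·D₂` with `c₁ = −c₂ = (|1−2p|ε+1)/(2(1−ε))` and the stated
Choi matrices. -/
theorem stmt15 (p ε : ℝ) (hp0 : 0 ≤ p) (hp1 : p ≤ 1) (hε0 : 0 ≤ ε) (hε1 : ε < 1) :
    IsLeast (retrCosts (gad p ε) PauliZ) ((|1 - 2 * p| * ε + 1) / (1 - ε)) ∧
    ∃ D₁ D₂ : MatC (Fin 2) →ₗ[ℂ] MatC (Fin 2),
      IsQuantumChannel D₁ ∧ IsQuantumChannel D₂ ∧
      choi D₁ = ((1 / (2 * (|1 - 2 * p| * ε + 1)) : ℝ) : ℂ) • (PauliZ ⊗ₖ PauliZ) +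
        ((ε * (1 - 2 * p) / (2 * (|1 - 2 * p| * ε + 1)) : ℝ) : ℂ) •
          ((1 : MatC (Fin 2)) ⊗ₖ PauliZ) +
        (1 / 2 : ℂ) • ((1 : MatC (Fin 2)) ⊗ₖ (1 : MatC (Fin 2))) ∧
      choi D₂ = -(((1 / (2 * (|1 - 2 * p| * ε + 1)) : ℝ) : ℂ) • (PauliZ ⊗ₖ PauliZ)) -
        ((ε * (1 - 2 * p) / (2 * (|1 - 2 * p| * ε + 1)) : ℝ) : ℂ) •
          ((1 : MatC (Fin 2)) ⊗ₖ PauliZ) +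
        (1 / 2 : ℂ) • ((1 : MatC (Fin 2)) ⊗ₖ (1 : MatC (Fin 2))) ∧
      ∃ c₁ c₂ : ℝ, c₁ = (|1 - 2 * p| * ε + 1) / (2 * (1 - ε)) ∧ c₂ = -c₁ ∧
        (∀ ρ : MatC (Fin 2), IsDensityMatrix ρ →
          ((((c₁ : ℂ) • D₁ + (c₂ : ℂ) • D₂) (gad p ε ρ)) * PauliZ).trace =
            (ρ * PauliZ).trace) ∧
        |c₁| + |c₂| = (|1 - 2 * p| * ε + 1) / (1 - ε) := by
  have h1ε : (0:ℝ) < 1 - ε := by linarith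
  have hm0 : 0 ≤ |1 - 2*p| := abs_nonneg _
  have hm1 : |1 - 2*p| ≤ 1 := by rw [abs_le]; constructor <;> linarith
  have hk0 : (0:ℝ) < |1 - 2*p| * ε + 1 := by nlinarith
  have e1 : ε * (1 - 2*p) ≤ ε * |1 - 2*p| := by
    exact mul_le_mul_of_nonneg_left (le_abs_self _) hε0
  have e2 : -(ε * |1 - 2*p|) ≤ ε * (1 - 2*p) := by
    have := mul_le_mul_of_nonneg_left (neg_abs_le (1 - 2*p)) hε0
    linarith
  have e3 : ε * |1 - 2*p| < 1 := by nlinarith [mul_le_mul_of_nonneg_left hm1 hε0]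
  set x : ℝ := 1 / (2 * (|1 - 2 * p| * ε + 1)) with hx
  set y : ℝ := ε * (1 - 2 * p) / (2 * (|1 - 2 * p| * ε + 1)) with hy
  have hden : (0:ℝ) < 2 * (|1 - 2 * p| * ε + 1) := by linarith
  have hxy : x + y = (1 + ε * (1 - 2*p)) / (2 * (|1 - 2 * p| * ε + 1)) := by
    rw [hx, hy]; ring
  have hxy' : x - y = (1 - ε * (1 - 2*p)) / (2 * (|1 - 2 * p| * ε + 1)) := by
    rw [hx, hy]; ring
  have hb1 : |x + y| ≤ 1/2 := by
    rw [hxy, abs_div, abs_of_pos hden, abs_of_pos (by linarith), div_le_iff₀ hden]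
    linarith
  have hb2 : |x - y| ≤ 1/2 := by
    rw [hxy', abs_div, abs_of_pos hden, abs_of_pos (by linarith), div_le_iff₀ hden]
    linarith
  have hb1' : |(-x) + (-y)| ≤ 1/2 := by
    rw [show (-x) + (-y) = -(x+y) by ring, abs_neg]; exact hb1
  have hb2' : |(-x) - (-y)| ≤ 1/2 := by
    rw [show (-x) - (-y) = -(x-y) by ring, abs_neg]; exact hb2
  have hch1 : IsQuantumChannel (retr x y) := retr_channel x y hb1 hb2
  have hch2 : IsQuantumChannel (retr (-x) (-y)) := retr_channel (-x) (-y) hb1' hb2'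
  set c₁ : ℝ := (|1 - 2 * p| * ε + 1) / (2 * (1 - ε)) with hc1
  have hc1pos : 0 < c₁ := by rw [hc1]; positivity
  -- the retrieval identity
  have key : ∀ ρ : MatC (Fin 2), IsDensityMatrix ρ →
      ((((c₁ : ℂ) • retr x y + ((-c₁ : ℝ) : ℂ) • retr (-x) (-y)) (gad p ε ρ)) * PauliZ).trace
        = (ρ * PauliZ).trace := by
    intro ρ hρ
    have htrρ : ρ 0 0 + ρ 1 1 = 1 := by
      have := hρ.2; simpa [Matrix.trace, Fin.sum_univ_two] using this
    have hrhs : (ρ * PauliZ).trace = ρ 0 0 - ρ 1 1 := by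
      simp [Matrix.trace, Matrix.mul_apply, Fin.sum_univ_two, PauliZ]; ring
    simp only [LinearMap.add_apply, LinearMap.smul_apply, Matrix.add_mul, Matrix.smul_mul,
      Matrix.trace_add, Matrix.trace_smul, retr_trace_Z, smul_eq_mul, hrhs]
    rw [gad_apply_00 p ε hp0 hp1 hε0 hε1.le, gad_apply_11 p ε hp0 hp1 hε0 hε1.le]
    have h11 : ρ 1 1 = 1 - ρ 0 0 := by linear_combination htrρ
    rw [h11, hc1, hx, hy]
    have hkC' : ((|1 - 2*p| : ℝ) : ℂ) * (ε:ℂ) + 1 ≠ 0 := by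
      exact_mod_cast hk0.ne'
    have hεC' : (1:ℂ) - (ε:ℂ) ≠ 0 := by exact_mod_cast h1ε.ne'
    push_cast
    field_simp [hkC', hεC']
    ring
  -- membership data
  have hmem : ((|1 - 2 * p| * ε + 1) / (1 - ε)) ∈ retrCosts (gad p ε) PauliZ := by
    refine ⟨c₁, -c₁, retr x y, retr (-x) (-y), hch1, hch2, ?_, ?_⟩
    · intro ρ hρ
      have := key ρ hρ
      simpa using this
    · rw [abs_neg, abs_of_pos hc1pos, hc1]
      field_simp
      ring
  constructor
  · constructor
    · exact hmem
    · -- lower bound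
      rintro s ⟨d₁, d₂, D₁, D₂, hD₁, hD₂, hret, rfl⟩
      obtain ⟨g₁, hg₁, hG₁⟩ := channel_trace_Z D₁ hD₁ 0
      obtain ⟨h₁, hh₁, hH₁⟩ := channel_trace_Z D₁ hD₁ 1
      obtain ⟨g₂, hg₂, hG₂⟩ := channel_trace_Z D₂ hD₂ 0
      obtain ⟨h₂, hh₂, hH₂⟩ := channel_trace_Z D₂ hD₂ 1
      have hsplit : ∀ s t : ℝ, (!![((s:ℝ):ℂ), 0; 0, ((t:ℝ):ℂ)] : MatC (Fin 2)) =
          (s:ℂ) • Matrix.single 0 0 1 + (t:ℂ) • Matrix.single 1 1 1 := by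
        intro s t; ext i j
        fin_cases i <;> fin_cases j <;> simp [Matrix.single]
      have hd0 : IsDensityMatrix (!![1, 0; 0, 0] : MatC (Fin 2)) := by
        constructor
        · have : (!![1, 0; 0, 0] : MatC (Fin 2)) = Matrix.diagonal ![1, 0] := by
            ext i j; fin_cases i <;> fin_cases j <;> simp [Matrix.diagonal]
          rw [this]
          refine Matrix.posSemidef_diagonal_iff.mpr fun i => ?_
          fin_cases i <;> simp
        · simp [Matrix.trace, Fin.sum_univ_two]
      have hd1 : IsDensityMatrix (!![0, 0; 0, 1] : MatC (Fin 2)) := by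
        constructor
        · have : (!![0, 0; 0, 1] : MatC (Fin 2)) = Matrix.diagonal ![0, 1] := by
            ext i j; fin_cases i <;> fin_cases j <;> simp [Matrix.diagonal]
          rw [this]
          refine Matrix.posSemidef_diagonal_iff.mpr fun i => ?_
          fin_cases i <;> simp
        · simp [Matrix.trace, Fin.sum_univ_two]
      have he1 := hret _ hd0
      have he2 := hret _ hd1
      rw [gad_E00 p ε hp0 hp1 hε0 hε1.le, hsplit] at he1
      rw [gad_E11 p ε hp0 hp1 hε0 hε1.le, hsplit] at he2
      have hr1 : ((!![1, 0; 0, 0] : MatC (Fin 2)) * PauliZ).trace = 1 := by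
        simp [Matrix.trace, Matrix.mul_apply, Fin.sum_univ_two, PauliZ]
      have hr2 : ((!![0, 0; 0, 1] : MatC (Fin 2)) * PauliZ).trace = -1 := by
        simp [Matrix.trace, Matrix.mul_apply, Fin.sum_univ_two, PauliZ]
      rw [hr1] at he1
      rw [hr2] at he2
      simp only [LinearMap.add_apply, LinearMap.smul_apply, map_add, _root_.map_smul] at he1 he2
      simp only [Matrix.add_mul, Matrix.smul_mul, Matrix.trace_add, Matrix.trace_smul,
        smul_eq_mul, hG₁, hH₁, hG₂, hH₂] at he1 he2
      have E1 : (1 - ε*(1-p)) * (d₁ * g₁ + d₂ * g₂)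
          + ε*(1-p) * (d₁ * h₁ + d₂ * h₂) = 1 := by
        exact_mod_cast he1
      have E2 : ε*p * (d₁ * g₁ + d₂ * g₂)
          + (1 - ε*p) * (d₁ * h₁ + d₂ * h₂) = -1 := by
        exact_mod_cast he2
      have hA : (1-ε) * (d₁*g₁ + d₂*g₂) = 1 + ε*(1-2*p) := by
        linear_combination (1 - ε*p) * E1 - (ε*(1-p)) * E2
      have hB : (1-ε) * (d₁*h₁ + d₂*h₂) = -(1 + ε*(2*p-1)) := by
        linear_combination (-(ε*p)) * E1 + (1 - ε*(1-p)) * E2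
      have habs1 : d₁*g₁ + d₂*g₂ ≤ |d₁| + |d₂| := by
        calc d₁*g₁ + d₂*g₂ ≤ |d₁*g₁ + d₂*g₂| := le_abs_self _
          _ ≤ |d₁*g₁| + |d₂*g₂| := abs_add_le _ _
          _ ≤ |d₁| + |d₂| := by
              rw [abs_mul, abs_mul]
              exact add_le_add (mul_le_of_le_one_right (abs_nonneg _) hg₁)
                (mul_le_of_le_one_right (abs_nonneg _) hg₂)
      have habs2 : -(|d₁| + |d₂|) ≤ d₁*h₁ + d₂*h₂ := by
        have : |d₁*h₁ + d₂*h₂| ≤ |d₁| + |d₂| := by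
          calc |d₁*h₁ + d₂*h₂| ≤ |d₁*h₁| + |d₂*h₂| := abs_add_le _ _
            _ ≤ |d₁| + |d₂| := by
                rw [abs_mul, abs_mul]
                exact add_le_add (mul_le_of_le_one_right (abs_nonneg _) hh₁)
                  (mul_le_of_le_one_right (abs_nonneg _) hh₂)
        linarith [neg_abs_le (d₁*h₁ + d₂*h₂)]
      rw [div_le_iff₀ h1ε]
      rcases abs_cases (1 - 2*p) with ⟨he, _⟩ | ⟨he, _⟩
      · rw [he]
        nlinarith [mul_le_mul_of_nonneg_left habs1 h1ε.le]
      · rw [he]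
        nlinarith [mul_le_mul_of_nonneg_left (neg_le_neg habs2) h1ε.le]
  · refine ⟨retr x y, retr (-x) (-y), hch1, hch2, ?_, ?_, c₁, -c₁, rfl, rfl, ?_, ?_⟩
    · exact choi_retr x y
    · rw [choi_retr]
      push_cast
      simp only [neg_smul]
      abel
    · intro ρ hρ
      have := key ρ hρ
      simpa using this
    · rw [abs_neg, abs_of_pos hc1pos, hc1]
      field_simp
      ring
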